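/- For every regular expression e over α, every Kleene algebra K and every map h : α → K, the interpretation of e equals the sum of the interpretations of the elements of ι(e): ĥ e = ∑_{e' ∈ ι(e)} ĥ e'. -/

import Mathlib

open scoped Computability

/-- Homomorphic extension of `h : α → K` to regular expressions. -/
def interp {α : Type*} {K : Type*} [KleeneAlgebra K] (h : α → K) :
    RegularExpression α → K
  | .zero => 0
  | .epsilon => 1
  | .char a => h a
  | .plus e f => interp h e + interp h f
  | .comp e f => interp h e * interp h f
  | .star e => KStar.kstar (interp h e)

universe u

/-- `e ⊴ f`: under every interpretation into any Kleene algebra, `ĥ e ≤ ĥ f`. -/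
def kle {α : Type*} (e f : RegularExpression α) : Prop :=
  ∀ (K : Type u) [KleeneAlgebra K] (h : α → K), interp h e ≤ interp h f

/-- The initial states of the Antimirov automaton of a regular expression. -/
def ini {α : Type*} : RegularExpression α → Set (RegularExpression α)
  | .zero => ∅
  | .epsilon => {1}
  | .char a => {RegularExpression.char a}
  | .plus e f => ini e ∪ ini f
  | .comp e f => (fun e' => e' * f) '' ini e
  | .star e => (fun e' => e' * e.star) '' ini e ∪ {1}

lemma ini_finite {α : Type*} : ∀ e : RegularExpression α, (ini e).Finite := by
  intro e
  induction e with
  | zero => exact Set.finite_empty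
  | epsilon => exact Set.finite_singleton _
  | char a => exact Set.finite_singleton _
  | plus e f ihe ihf => exact ihe.union ihf
  | comp e f ihe _ => exact ihe.image _
  | star e ihe => exact (ihe.image _).union (Set.finite_singleton _)

lemma finset_sum_union_idem {ι : Type*} {K : Type*} [IdemSemiring K]
    [DecidableEq ι] (s t : Finset ι) (f : ι → K) :
    ∑ x ∈ s ∪ t, f x = (∑ x ∈ s, f x) + ∑ x ∈ t, f x := by
  have h := Finset.sum_union_inter (s₁ := s) (s₂ := t) (f := f)
  have hle : ∑ x ∈ s ∩ t, f x ≤ ∑ x ∈ s ∪ t, f x :=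
    Finset.sum_le_sum_of_subset Finset.inter_subset_union
  calc ∑ x ∈ s ∪ t, f x = ∑ x ∈ s ∪ t, f x + ∑ x ∈ s ∩ t, f x := hle.add_eq_left.symm
  _ = _ := h

lemma finsum_mem_union_idem {ι : Type*} {K : Type*} [IdemSemiring K] {s t : Set ι}
    (hs : s.Finite) (ht : t.Finite) (f : ι → K) :
    (∑ᶠ x ∈ s ∪ t, f x) = (∑ᶠ x ∈ s, f x) + ∑ᶠ x ∈ t, f x := by
  classical
  rw [← hs.coe_toFinset, ← ht.coe_toFinset, ← Finset.coe_union,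
    finsum_mem_coe_finset, finsum_mem_coe_finset, finsum_mem_coe_finset,
    finset_sum_union_idem]

lemma finsum_mem_mul_right {ι : Type*} {K : Type*} [NonUnitalNonAssocSemiring K] {s : Set ι}
    (hs : s.Finite) (f : ι → K) (c : K) :
    (∑ᶠ x ∈ s, f x * c) = (∑ᶠ x ∈ s, f x) * c := by
  classical
  rw [← hs.coe_toFinset, finsum_mem_coe_finset, finsum_mem_coe_finset, Finset.sum_mul]

lemma one_add_mul_kstar' {K : Type*} [KleeneAlgebra K] (a : K) : 1 + a * a∗ = a∗ := by
  refine le_antisymm (add_le one_le_kstar mul_kstar_le_kstar) ?_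
  refine kstar_le_of_mul_le_right le_self_add ?_
  rw [mul_add, mul_one]
  refine add_le ?_ ?_
  · exact ((le_mul_of_one_le_right zero_le one_le_kstar).trans (self_le_add_left _ _))
  · exact ((mul_le_mul_right mul_kstar_le_kstar _).trans (self_le_add_left _ _))

lemma comp_left_injOn {α : Type*} (f : RegularExpression α) (s : Set (RegularExpression α)) :
    s.InjOn (fun e' => e' * f) := by
  intro a _ b _ h
  have h' : RegularExpression.comp a f = RegularExpression.comp b f := h
  injection h'

/-- The interpretation of `e` is the sum of the interpretations of the elements of `ι(e)`. -/
theorem interp_eq_sum_ini {α : Type*} (e : RegularExpression α) :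
    ∀ (K : Type*) [KleeneAlgebra K] (h : α → K),
      interp h e = ∑ᶠ e' ∈ ini e, interp h e' := by
  induction e with
  | zero => intro K _ h; simp [ini, interp, finsum_mem_empty]
  | epsilon => intro K _ h; simp [ini, interp, finsum_mem_singleton]
  | char a => intro K _ h; simp [ini, interp, finsum_mem_singleton]
  | plus e f ihe ihf =>
      intro K _ h
      rw [show ini (e.plus f) = ini e ∪ ini f from rfl,
        finsum_mem_union_idem (ini_finite e) (ini_finite f)]
      exact congrArg₂ (· + ·) (ihe K h) (ihf K h)
  | comp e f ihe _ =>
      intro K _ h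
      rw [show ini (e.comp f) = (fun e' => e' * f) '' ini e from rfl,
        finsum_mem_image (comp_left_injOn f (ini e))]
      show interp h e * interp h f = ∑ᶠ e' ∈ ini e, interp h e' * interp h f
      rw [finsum_mem_mul_right (ini_finite e), ← ihe K h]
  | star e ihe =>
      intro K _ h
      rw [show ini e.star = (fun e' => e' * e.star) '' ini e ∪ {1} from rfl,
        finsum_mem_union_idem ((ini_finite e).image _) (Set.finite_singleton _),
        finsum_mem_image (comp_left_injOn e.star (ini e)), finsum_mem_singleton]
      show (interp h e)∗ = (∑ᶠ e' ∈ ini e, interp h e' * (interp h e)∗) + interp h 1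
      rw [finsum_mem_mul_right (ini_finite e), ← ihe K h]
      show (interp h e)∗ = interp h e * (interp h e)∗ + 1
      rw [add_comm, one_add_mul_kstar']
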